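/- Let n ≥ 3 be an integer, ℓ > 0, β = 1, and 0 < m < (ℓ^{n−2}/n)·(1 − 2/n)^{n/2 − 1}. Then the Birmingham metric function f(r) = 1 − 2m/r^{n−2} − r²/ℓ² has exactly two zeros r₀⁽¹⁾ < r₀⁽²⁾ in (0,∞), and both are first-order: f'(r₀⁽¹⁾) > 0 and f'(r₀⁽²⁾) < 0. -/

import Mathlib

lemma birm_deriv (m ℓ : ℝ) (k : ℕ) (r : ℝ) (hr : 0 < r) :
    deriv (fun r : ℝ => 1 - 2 * m / r ^ k - r ^ 2 / ℓ ^ 2) r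
      = 2 * m * k / r ^ (k + 1) - 2 * r / ℓ ^ 2 := by
  have hr0 : r ≠ 0 := ne_of_gt hr
  have h1 : HasDerivAt (fun r : ℝ => r ^ k) ((k : ℝ) * r ^ (k - 1)) r := by
    simpa using hasDerivAt_pow k r
  have h2 : HasDerivAt (fun r : ℝ => (r ^ k)⁻¹)
      (-((k : ℝ) * r ^ (k - 1)) / (r ^ k) ^ 2) r := h1.inv (pow_ne_zero k hr0)
  have hA : HasDerivAt (fun r : ℝ => 2 * m / r ^ k)
      (2 * m * (-((k : ℝ) * r ^ (k - 1)) / (r ^ k) ^ 2)) r := by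
    simpa [div_eq_mul_inv] using h2.const_mul (2 * m)
  have hB : HasDerivAt (fun r : ℝ => r ^ 2 / ℓ ^ 2) (2 * r / ℓ ^ 2) r := by
    simpa using (hasDerivAt_pow 2 r).div_const (ℓ ^ 2)
  have hf : HasDerivAt (fun r : ℝ => 1 - 2 * m / r ^ k - r ^ 2 / ℓ ^ 2)
      (0 - 2 * m * (-((k : ℝ) * r ^ (k - 1)) / (r ^ k) ^ 2) - 2 * r / ℓ ^ 2) r :=
    ((hasDerivAt_const r (1:ℝ)).sub hA).sub hB
  rw [hf.deriv]
  rcases Nat.eq_zero_or_pos k with hk0 | hk1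
  · subst hk0; simp
  have hpow : r ^ (k - 1) * r ^ (k + 1) = (r ^ k) ^ 2 := by
    rw [← pow_add, ← pow_mul]
    congr 1
    omega
  have hpk : (r ^ (k+1)) ≠ 0 := pow_ne_zero _ hr0
  have key : -((k:ℝ) * r ^ (k - 1)) / (r ^ k) ^ 2 = -((k:ℝ) / r ^ (k + 1)) := by
    rw [neg_div, neg_inj, div_eq_div_iff (by positivity) hpk, mul_assoc, hpow]
  rw [key]
  ring

lemma birm_main (k : ℕ) (hk : 1 ≤ k) (ℓ m : ℝ) (hℓ : 0 < ℓ) (hm : 0 < m)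
    (hm' : m < (ℓ ^ k / ((k:ℝ) + 2)) * (1 - 2 / ((k:ℝ) + 2)) ^ (((k:ℝ) + 2) / 2 - 1)) :
    ∃ r₁ r₂ : ℝ, 0 < r₁ ∧ r₁ < r₂ ∧
      (1 - 2 * m / r₁ ^ k - r₁ ^ 2 / ℓ ^ 2 = 0) ∧
      (1 - 2 * m / r₂ ^ k - r₂ ^ 2 / ℓ ^ 2 = 0) ∧
      (∀ r : ℝ, 0 < r → 1 - 2 * m / r ^ k - r ^ 2 / ℓ ^ 2 = 0 →
        r = r₁ ∨ r = r₂) ∧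
      0 < deriv (fun r : ℝ => 1 - 2 * m / r ^ k - r ^ 2 / ℓ ^ 2) r₁ ∧
      deriv (fun r : ℝ => 1 - 2 * m / r ^ k - r ^ 2 / ℓ ^ 2) r₂ < 0 := by
  set g : ℝ → ℝ := fun r => 1 - 2 * m / r ^ k - r ^ 2 / ℓ ^ 2 with hg_def
  have hkR : (1:ℝ) ≤ (k:ℝ) := by exact_mod_cast hk
  set nR : ℝ := (k:ℝ) + 2 with hnR_def
  have hnR0 : (0:ℝ) < nR := by rw [hnR_def]; linarith
  have hnRne : nR ≠ 0 := ne_of_gt hnR0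
  set q : ℝ := (k:ℝ) / nR with hq_def
  have hq_pos : 0 < q := by rw [hq_def]; positivity
  have hq_eq : 1 - 2 / nR = q := by rw [hq_def, hnR_def]; field_simp; ring
  set A : ℝ := m * (k:ℝ) * ℓ ^ 2 with hA_def
  have hA_pos : 0 < A := by rw [hA_def]; positivity
  set rc : ℝ := A ^ (nR⁻¹) with hrc_def
  have hrc_pos : 0 < rc := Real.rpow_pos_of_pos hA_pos _
  have hcast : ((k + 2 : ℕ) : ℝ) = nR := by rw [hnR_def]; push_cast; ring
  have hrc_pow : rc ^ (k + 2) = A := by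
    rw [hrc_def, ← hcast]
    exact Real.rpow_inv_natCast_pow hA_pos.le (by omega)
  -- key inequality
  have hm'' : m < ℓ ^ k / nR * q ^ (nR / 2 - 1) := by rwa [hq_eq] at hm'
  have e1 : (ℓ ^ k / nR * q ^ (nR / 2 - 1)) * ((k:ℝ) * ℓ ^ 2)
      = (q ^ (nR / 2 - 1) * q) * ℓ ^ (k + 2) := by
    rw [hq_def]
    field_simp
    ring
  have e2 : q ^ (nR / 2 - 1) * q = q ^ (nR / 2) := by
    nth_rw 2 [← Real.rpow_one q]
    rw [← Real.rpow_add hq_pos]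
    norm_num
  have e3 : ((k:ℝ) * ℓ ^ 2 / nR) ^ (nR / 2) = q ^ (nR / 2) * ℓ ^ (k + 2) := by
    have hql : (k:ℝ) * ℓ ^ 2 / nR = q * ℓ ^ 2 := by rw [hq_def]; ring
    rw [hql, Real.mul_rpow hq_pos.le (by positivity)]
    congr 1
    rw [← Real.rpow_natCast ℓ 2, ← Real.rpow_mul hℓ.le, ← hcast, ← Real.rpow_natCast ℓ (k + 2)]
    congr 1
    rw [hcast]
    push_cast
    ring
  have hAlt : A < ((k:ℝ) * ℓ ^ 2 / nR) ^ (nR / 2) := by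
    calc A = m * ((k:ℝ) * ℓ ^ 2) := by rw [hA_def]; ring
      _ < (ℓ ^ k / nR * q ^ (nR / 2 - 1)) * ((k:ℝ) * ℓ ^ 2) :=
          mul_lt_mul_of_pos_right hm'' (by positivity)
      _ = (q ^ (nR / 2 - 1) * q) * ℓ ^ (k + 2) := e1
      _ = q ^ (nR / 2) * ℓ ^ (k + 2) := by rw [e2]
      _ = ((k:ℝ) * ℓ ^ 2 / nR) ^ (nR / 2) := e3.symm
  have hrc2 : rc ^ 2 < (k:ℝ) * ℓ ^ 2 / nR := by
    have e4 : rc ^ 2 = A ^ ((2:ℝ) / nR) := by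
      rw [hrc_def, ← Real.rpow_natCast (A ^ nR⁻¹) 2, ← Real.rpow_mul hA_pos.le]
      congr 1
      push_cast
      ring
    have e5 : (((k:ℝ) * ℓ ^ 2 / nR) ^ (nR / 2)) ^ ((2:ℝ) / nR) = (k:ℝ) * ℓ ^ 2 / nR := by
      rw [← Real.rpow_mul (by positivity), show nR / 2 * (2 / nR) = 1 by field_simp,
        Real.rpow_one]
    rw [e4, ← e5]
    exact Real.rpow_lt_rpow hA_pos.le hAlt (by positivity)
  -- value at critical point
  have hrck : rc ^ k * rc ^ 2 = m * (k:ℝ) * ℓ ^ 2 := by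
    rw [← pow_add]
    rw [hA_def] at hrc_pow
    exact hrc_pow
  have hgrc : 0 < g rc := by
    have h2m : 2 * m / rc ^ k = 2 * rc ^ 2 / ((k:ℝ) * ℓ ^ 2) := by
      rw [div_eq_div_iff (by positivity) (by positivity)]
      linear_combination (-2 : ℝ) * hrck
    have h6 : rc ^ 2 * nR < (k:ℝ) * ℓ ^ 2 := by rwa [lt_div_iff₀ hnR0] at hrc2
    have h7 : 2 * rc ^ 2 / ((k:ℝ) * ℓ ^ 2) + rc ^ 2 / ℓ ^ 2 < 1 := by
      rw [div_add_div _ _ (by positivity) (by positivity), div_lt_one (by positivity)]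
      calc 2 * rc ^ 2 * ℓ ^ 2 + (k:ℝ) * ℓ ^ 2 * rc ^ 2 = (rc ^ 2 * nR) * ℓ ^ 2 := by
            rw [hnR_def]; ring
        _ < ((k:ℝ) * ℓ ^ 2) * ℓ ^ 2 := mul_lt_mul_of_pos_right h6 (by positivity)
        _ = (k:ℝ) * ℓ ^ 2 * ℓ ^ 2 := by ring
    show (0:ℝ) < 1 - 2 * m / rc ^ k - rc ^ 2 / ℓ ^ 2
    rw [h2m]
    linarith
  -- continuity
  have hcont : ContinuousOn g (Set.Ioi (0:ℝ)) := by
    intro x hx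
    have hx0 : x ≠ 0 := ne_of_gt hx
    apply ContinuousAt.continuousWithinAt
    exact ((continuousAt_const.sub (continuousAt_const.div
      ((continuous_pow k).continuousAt) (pow_ne_zero k hx0))).sub
      (((continuous_pow 2).continuousAt).div_const _))
  -- derivative signs
  have hdpos : ∀ x : ℝ, 0 < x → x < rc →
      0 < 2 * m * (k:ℝ) / x ^ (k + 1) - 2 * x / ℓ ^ 2 := by
    intro x hx hxrc
    rw [sub_pos, div_lt_div_iff₀ (by positivity) (by positivity)]
    have h1 : x ^ (k + 2) < rc ^ (k + 2) := pow_lt_pow_left₀ hxrc hx.le (by omega)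
    calc 2 * x * x ^ (k + 1) = 2 * x ^ (k + 2) := by ring
      _ < 2 * A := by rw [← hrc_pow]; linarith
      _ = 2 * m * (k:ℝ) * ℓ ^ 2 := by rw [hA_def]; ring
  have hdneg : ∀ x : ℝ, rc < x →
      2 * m * (k:ℝ) / x ^ (k + 1) - 2 * x / ℓ ^ 2 < 0 := by
    intro x hxrc
    have hx : 0 < x := hrc_pos.trans hxrc
    rw [sub_neg, div_lt_div_iff₀ (by positivity) (by positivity)]
    have h1 : rc ^ (k + 2) < x ^ (k + 2) := pow_lt_pow_left₀ hxrc hrc_pos.le (by omega)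
    calc 2 * m * (k:ℝ) * ℓ ^ 2 = 2 * A := by rw [hA_def]; ring
      _ < 2 * x ^ (k + 2) := by rw [← hrc_pow]; linarith
      _ = 2 * x * x ^ (k + 1) := by ring
  -- monotonicity
  have hmono : StrictMonoOn g (Set.Ioc 0 rc) := by
    apply strictMonoOn_of_deriv_pos (convex_Ioc 0 rc)
      (hcont.mono (fun x hx => hx.1))
    intro x hx
    rw [interior_Ioc] at hx
    rw [hg_def, birm_deriv m ℓ k x hx.1]
    exact hdpos x hx.1 hx.2
  have hanti : StrictAntiOn g (Set.Ici rc) := by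
    apply strictAntiOn_of_deriv_neg (convex_Ici rc)
      (hcont.mono (fun x hx => lt_of_lt_of_le hrc_pos hx))
    intro x hx
    rw [interior_Ici] at hx
    rw [hg_def, birm_deriv m ℓ k x (hrc_pos.trans hx)]
    exact hdneg x hx
  -- endpoint values
  set a : ℝ := min (min (2 * m) 1) (rc / 2) with ha_def
  have ha_pos : 0 < a := by
    rw [ha_def]
    apply lt_min (lt_min (by linarith) one_pos) (by linarith)
  have ha_lt : a < rc := by
    calc a ≤ rc / 2 := min_le_right _ _
      _ < rc := by linarith
  have hga : g a < 0 := by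
    have h1 : a ^ k ≤ a :=
      pow_le_of_le_one ha_pos.le ((min_le_left _ _).trans (min_le_right _ _)) (by omega)
    have h2 : a ≤ 2 * m := (min_le_left _ _).trans (min_le_left _ _)
    have h3 : 1 ≤ 2 * m / a ^ k := (one_le_div (by positivity)).mpr (h1.trans h2)
    have h4 : 0 < a ^ 2 / ℓ ^ 2 := by positivity
    show 1 - 2 * m / a ^ k - a ^ 2 / ℓ ^ 2 < 0
    linarith
  set b : ℝ := max (rc + 1) ℓ with hb_def
  have hb_gt : rc < b := lt_of_lt_of_le (lt_add_one rc) (le_max_left _ _)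
  have hb_pos : 0 < b := hrc_pos.trans hb_gt
  have hgb : g b < 0 := by
    have hbl : ℓ ≤ b := le_max_right _ _
    have h1 : 1 ≤ b ^ 2 / ℓ ^ 2 :=
      (one_le_div (by positivity)).mpr (pow_le_pow_left₀ hℓ.le hbl 2)
    have h2 : 0 < 2 * m / b ^ k := by positivity
    show 1 - 2 * m / b ^ k - b ^ 2 / ℓ ^ 2 < 0
    linarith
  -- zeros by IVT
  obtain ⟨r₁, hr₁mem, hr₁z⟩ :=
    intermediate_value_Ioo ha_lt.le
      (hcont.mono (fun x hx => lt_of_lt_of_le ha_pos hx.1)) ⟨hga, hgrc⟩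
  obtain ⟨r₂, hr₂mem, hr₂z⟩ :=
    intermediate_value_Ioo' hb_gt.le
      (hcont.mono (fun x hx => lt_of_lt_of_le hrc_pos hx.1)) ⟨hgb, hgrc⟩
  have hr₁pos : 0 < r₁ := ha_pos.trans hr₁mem.1
  refine ⟨r₁, r₂, hr₁pos, hr₁mem.2.trans hr₂mem.1, hr₁z, hr₂z, ?_, ?_, ?_⟩
  · intro r hr hrz
    have hgr : g r = 0 := hrz
    rcases lt_trichotomy r rc with h | h | h
    · left
      exact hmono.injOn (Set.mem_Ioc.mpr ⟨hr, h.le⟩)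
        (Set.mem_Ioc.mpr ⟨hr₁pos, hr₁mem.2.le⟩) (by rw [hgr, hr₁z])
    · exfalso
      rw [h] at hgr
      linarith
    · right
      exact hanti.injOn (Set.mem_Ici.mpr h.le) (Set.mem_Ici.mpr hr₂mem.1.le)
        (by rw [hgr, hr₂z])
  · rw [birm_deriv m ℓ k r₁ hr₁pos]
    exact hdpos r₁ hr₁pos hr₁mem.2
  · rw [birm_deriv m ℓ k r₂ (hrc_pos.trans hr₂mem.1)]
    exact hdneg r₂ hr₂mem.1

theorem birmingham_two_zeros (n : ℕ) (hn : 3 ≤ n) (ℓ m : ℝ) (hℓ : 0 < ℓ)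
    (hm : 0 < m)
    (hm' : m < (ℓ ^ (n - 2) / (n : ℝ)) * (1 - 2 / (n : ℝ)) ^ ((n : ℝ) / 2 - 1)) :
    ∃ r₁ r₂ : ℝ, 0 < r₁ ∧ r₁ < r₂ ∧
      (1 - 2 * m / r₁ ^ (n - 2) - r₁ ^ 2 / ℓ ^ 2 = 0) ∧
      (1 - 2 * m / r₂ ^ (n - 2) - r₂ ^ 2 / ℓ ^ 2 = 0) ∧
      (∀ r : ℝ, 0 < r → 1 - 2 * m / r ^ (n - 2) - r ^ 2 / ℓ ^ 2 = 0 →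
        r = r₁ ∨ r = r₂) ∧
      0 < deriv (fun r : ℝ => 1 - 2 * m / r ^ (n - 2) - r ^ 2 / ℓ ^ 2) r₁ ∧
      deriv (fun r : ℝ => 1 - 2 * m / r ^ (n - 2) - r ^ 2 / ℓ ^ 2) r₂ < 0 := by
  obtain ⟨k, rfl⟩ : ∃ k, n = k + 2 := ⟨n - 2, by omega⟩
  have hk : 1 ≤ k := by omega
  simp only [Nat.add_sub_cancel] at hm' ⊢
  have hm'' : m < (ℓ ^ k / ((k:ℝ) + 2)) * (1 - 2 / ((k:ℝ) + 2)) ^ (((k:ℝ) + 2) / 2 - 1) := by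
    push_cast at hm'
    exact hm'
  exact birm_main k hk ℓ m hℓ hm hm''
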